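/- Let f₀ : 𝔹^N → 𝔹^N be the vectorial negation f₀(x)_i = ¬x_i. Then the set of periodic points of G_{f₀} is dense in (X, d): for every (Š, Ě) ∈ X and every ε > 0 there exist (S̃, Ẽ) ∈ X and n ≥ 1 with G_{f₀}^n(S̃,Ẽ) = (S̃,Ẽ) and d((Š,Ě),(S̃,Ẽ)) < ε. -/

import Mathlib

open scoped BigOperators

/-- Distance between environments: number of differing cells. -/
noncomputable def dE (N : ℕ) (E F : Fin N → Bool) : ℝ :=
  ∑ k : Fin N, if E k = F k then 0 else 1

/-- Distance between strategies. -/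
noncomputable def dS (N : ℕ) (S T : ℕ → Fin N) : ℝ :=
  (9 / N) * ∑' k : ℕ, |((S k : ℕ) : ℝ) - ((T k : ℕ) : ℝ)| / 10 ^ (k + 1)

/-- The distance on the phase space `X = ⟦1,N⟧^ℕ × 𝔹^N`. -/
noncomputable def dX (N : ℕ) (X Y : (ℕ → Fin N) × (Fin N → Bool)) : ℝ :=
  dE N X.2 Y.2 + dS N X.1 Y.1

/-- `F_f(k, E)` agrees with `E` except at coordinate `k`, where it is `f(E)_k`. -/
def Ff (N : ℕ) (f : (Fin N → Bool) → (Fin N → Bool)) (k : Fin N)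
    (E : Fin N → Bool) : Fin N → Bool :=
  fun j => if j = k then f E k else E j

/-- The chaotic iterations map `G_f(S, E) = (σ S, F_f(S⁰, E))`. -/
def Gf (N : ℕ) (f : (Fin N → Bool) → (Fin N → Bool))
    (X : (ℕ → Fin N) × (Fin N → Bool)) : (ℕ → Fin N) × (Fin N → Bool) :=
  (fun n => X.1 (n + 1), Ff N f (X.1 0) X.2)

/-- The vectorial boolean negation. -/
def f0 (N : ℕ) : (Fin N → Bool) → (Fin N → Bool) := fun E i => ! E i

/-- Metric openness in the phase space. -/
def IsOpenX (N : ℕ) (U : Set ((ℕ → Fin N) × (Fin N → Bool))) : Prop :=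
  ∀ x ∈ U, ∃ ε > 0, ∀ y, dX N x y < ε → y ∈ U

lemma fst_iter (N : ℕ) (f : (Fin N → Bool) → (Fin N → Bool)) (n : ℕ)
    (X : (ℕ → Fin N) × (Fin N → Bool)) :
    ((Gf N f)^[n] X).1 = fun k => X.1 (k + n) := by
  induction n with
  | zero => simp
  | succ n ih =>
    rw [Function.iterate_succ_apply', Gf]
    funext k
    simp only [ih]
    have h : k + 1 + n = k + (n + 1) := by omega
    rw [h]

lemma snd_iter (N : ℕ) (n : ℕ) (X : (ℕ → Fin N) × (Fin N → Bool)) :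
    ((Gf N (f0 N))^[n] X).2 = fun j =>
      xor (X.2 j)
        (decide ((((Finset.range n).filter (fun i => X.1 i = j)).card % 2 = 1))) := by
  induction n with
  | zero => simp
  | succ n ih =>
    rw [Function.iterate_succ_apply', Gf]
    funext j
    simp only [Ff, fst_iter, ih, f0, zero_add]
    by_cases h : j = X.1 n
    · rw [if_pos h, ← h]
      set c := ((Finset.range n).filter (fun i => X.1 i = j)).card with hc
      have hcard : (((Finset.range (n+1)).filter (fun i => X.1 i = j)).card) = c + 1 := by
        rw [Finset.range_add_one, Finset.filter_insert, if_pos h.symm, Finset.card_insert_of_notMem]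
        simp
      rw [hcard]
      have hd : decide ((c + 1) % 2 = 1) = !decide (c % 2 = 1) := by
        rw [← decide_not]
        exact decide_eq_decide.mpr (by omega)
      rw [hd]
      cases X.2 j <;> cases decide (c % 2 = 1) <;> rfl
    · rw [if_neg h]
      have hcard : ((Finset.range (n+1)).filter (fun i => X.1 i = j)) =
          ((Finset.range n).filter (fun i => X.1 i = j)) := by
        rw [Finset.range_add_one, Finset.filter_insert, if_neg (fun hh => h hh.symm)]
      rw [hcard]

/-- Periodic points of `G_{f₀}` are dense in `(X, d)`. -/
theorem periodic_points_dense (N : ℕ) (hN : 1 ≤ N)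
    (P : (ℕ → Fin N) × (Fin N → Bool)) (ε : ℝ) (hε : 0 < ε) :
    ∃ Q, ∃ n ≥ 1, (Gf N (f0 N))^[n] Q = Q ∧ dX N P Q < ε := by
  obtain ⟨m0, hm0⟩ := exists_pow_lt_of_lt_one hε (by norm_num : (1:ℝ)/10 < 1)
  set m := max m0 1 with hmdef
  have hm1 : 1 ≤ m := le_max_right _ _
  have hmlt : ((1:ℝ)/10)^m < ε :=
    lt_of_le_of_lt (pow_le_pow_of_le_one (by norm_num) (by norm_num) (le_max_left _ _)) hm0
  set Q : (ℕ → Fin N) × (Fin N → Bool) := (fun k => P.1 (k % m), P.2) with hQdef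
  have hQ1 : ∀ k, Q.1 (k + m) = Q.1 k := by
    intro k
    show P.1 ((k + m) % m) = P.1 (k % m)
    rw [Nat.add_mod_right]
  refine ⟨Q, 2 * m, by omega, ?_, ?_⟩
  · -- periodicity
    set b : Fin N → Bool :=
      fun j => decide (((Finset.range m).filter (fun i => Q.1 i = j)).card % 2 = 1) with hb
    have hR : (Gf N (f0 N))^[m] Q = (Q.1, fun j => xor (Q.2 j) (b j)) := by
      apply Prod.ext
      · rw [fst_iter]; funext k; exact hQ1 k
      · rw [snd_iter]
    have h2 : 2 * m = m + m := by ring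
    rw [h2, Function.iterate_add_apply, hR]
    apply Prod.ext
    · rw [fst_iter]; funext k; exact hQ1 k
    · rw [snd_iter]
      funext j
      show xor (xor (Q.2 j) (b j)) (b j) = Q.2 j
      cases Q.2 j <;> cases b j <;> rfl
  · -- distance
    have hN0 : (0:ℝ) < N := by exact_mod_cast hN
    have hdE : dE N P.2 Q.2 = 0 := by simp [dE, hQdef]
    set g : ℕ → ℝ := fun k => |((P.1 k : ℕ) : ℝ) - ((Q.1 k : ℕ) : ℝ)| / 10 ^ (k + 1) with hg
    have hg0 : ∀ k, 0 ≤ g k := fun k => div_nonneg (abs_nonneg _) (by positivity)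
    have hgle : ∀ k, g k ≤ (N:ℝ) * (1/10)^(k+1) := by
      intro k
      have ha : ((P.1 k : ℕ) : ℝ) < N := by exact_mod_cast (P.1 k).is_lt
      have hb' : ((Q.1 k : ℕ) : ℝ) < N := by exact_mod_cast (Q.1 k).is_lt
      have ha0 : (0:ℝ) ≤ ((P.1 k : ℕ) : ℝ) := by positivity
      have hb0 : (0:ℝ) ≤ ((Q.1 k : ℕ) : ℝ) := by positivity
      have habs : |((P.1 k : ℕ) : ℝ) - ((Q.1 k : ℕ) : ℝ)| ≤ N := by
        rw [abs_le]; constructor <;> linarith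
      have h10 : (0:ℝ) < 10 ^ (k+1) := by positivity
      calc g k ≤ (N:ℝ) / 10 ^ (k+1) := div_le_div_of_nonneg_right habs h10.le |>.trans_eq rfl
        _ = (N:ℝ) * (1/10)^(k+1) := by rw [div_pow, one_pow]; ring
    have hgeo : Summable (fun k : ℕ => ((1:ℝ)/10)^k) :=
      summable_geometric_of_lt_one (by norm_num) (by norm_num)
    have hsum2 : Summable (fun k : ℕ => (N:ℝ) * (1/10)^(k+1)) := by
      have := (hgeo.mul_right ((1:ℝ)/10)).mul_left (N:ℝ)
      simpa [pow_succ, mul_assoc] using this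
    have hsumg : Summable g := Summable.of_nonneg_of_le hg0 hgle hsum2
    have hsplit : ∑' k, g k = ∑ i ∈ Finset.range m, g i + ∑' k, g (k + m) :=
      (Summable.sum_add_tsum_nat_add m hsumg).symm
    have hzero : ∑ i ∈ Finset.range m, g i = 0 := by
      apply Finset.sum_eq_zero
      intro i hi
      simp [hg, hQdef, Nat.mod_eq_of_lt (Finset.mem_range.mp hi)]
    have htail : ∑' k, g (k + m) ≤ (N:ℝ) * (1/10)^(m+1) * (1 - 1/10)⁻¹ := by
      have hsum3 : Summable (fun k : ℕ => (N:ℝ) * (1/10)^(m+1) * (1/10)^k) :=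
        hgeo.mul_left _
      have hle : ∀ k, g (k + m) ≤ (N:ℝ) * (1/10)^(m+1) * (1/10)^k := by
        intro k
        calc g (k + m) ≤ (N:ℝ) * (1/10)^(k + m + 1) := hgle (k + m)
          _ = (N:ℝ) * (1/10)^(m+1) * (1/10)^k := by
              have hexp : k + m + 1 = (m + 1) + k := by omega
              rw [hexp, pow_add]; ring
      calc ∑' k, g (k + m) ≤ ∑' k, (N:ℝ) * (1/10)^(m+1) * (1/10)^k :=
            Summable.tsum_le_tsum hle ((summable_nat_add_iff m).mpr hsumg) hsum3
        _ = (N:ℝ) * (1/10)^(m+1) * (1 - 1/10)⁻¹ := by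
            rw [tsum_mul_left, tsum_geometric_of_lt_one (by norm_num) (by norm_num)]
    have hdS : dS N P.1 Q.1 ≤ (1/10:ℝ)^m := by
      have h1 : dS N P.1 Q.1 = (9 / N) * ∑' k, g k := rfl
      have h2 : ∑' k, g k ≤ (N:ℝ) * (1/10)^(m+1) * (1 - 1/10)⁻¹ := by
        rw [hsplit, hzero, zero_add]; exact htail
      have h3 : (9 / (N:ℝ)) * ((N:ℝ) * (1/10)^(m+1) * (1 - 1/10)⁻¹) = (1/10)^m := by
        rw [pow_succ]
        field_simp
        ring
      rw [h1, ← h3]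
      exact mul_le_mul_of_nonneg_left h2 (by positivity)
    show dE N P.2 Q.2 + dS N P.1 Q.1 < ε
    rw [hdE, zero_add]
    exact lt_of_le_of_lt hdS hmlt
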